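/- For all integers f ≥ 2 and d ≥ 1, let G be the Hamming graph whose vertex set is {1,…,f}^d, with two d-tuples adjacent if and only if they agree in all but exactly one coordinate. Then the only f-FD connectivity certificate of G is G itself; in particular, every f-FD connectivity certificate of G has exactly n·(f−1)·d/2 edges, where n = f^d. -/

import Mathlib

open SimpleGraph

/-- `F` has faulty-degree at most `f`: every vertex is incident to at most `f` edges of `F`. -/
def DegLE {V : Type} (F : Set (Sym2 V)) (f : ℕ) : Prop :=
  ∀ v : V, {e ∈ F | v ∈ e}.ncard ≤ f

/-- `H` is an `f`-faulty-degree connectivity certificate of `G`. -/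
def IsFDCertificate {V : Type} (G H : SimpleGraph V) (f : ℕ) : Prop :=
  H ≤ G ∧ ∀ F : Set (Sym2 V), F ⊆ G.edgeSet → DegLE F f →
    ∀ u v : V, ((H.deleteEdges F).Reachable u v ↔ (G.deleteEdges F).Reachable u v)

/-- The Hamming graph on `{1,…,f}^d`: two tuples are adjacent iff they differ in exactly
one coordinate. -/
def hammingGraph (f d : ℕ) : SimpleGraph (Fin d → Fin f) where
  Adj x y := ∃! i : Fin d, x i ≠ y i
  symm := by
    constructor
    rintro x y ⟨i, hi, hu⟩
    exact ⟨i, fun h => hi h.symm, fun j hj => hu j (fun h => hj h.symm)⟩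
  loopless := by
    constructor
    rintro x ⟨i, hi, -⟩
    exact hi rfl

/-- If `u` and `w` are adjacent in the Hamming graph and differ at coordinate `i`,
then `w = Function.update u i (w i)`. -/
lemma hamming_adj_update {f d : ℕ} {u w : Fin d → Fin f} {i : Fin d}
    (h : (hammingGraph f d).Adj u w) (hi : u i ≠ w i) :
    w = Function.update u i (w i) := by
  obtain ⟨j, hj, hju⟩ := h
  have hij : i = j := hju i hi
  subst hij
  funext k
  by_cases hk : k = i
  · subst hk; simp
  · rw [Function.update_of_ne hk]
    by_contra hne
    exact hk (hju k fun h' => hne h'.symm)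

/-- the key counting lemma: degree of every vertex of the Hamming graph is `d * (f-1)`. -/
lemma hamming_degree (f d : ℕ) [DecidableRel (hammingGraph f d).Adj]
    (v : Fin d → Fin f) : (hammingGraph f d).degree v = d * (f - 1) := by
  classical
  rw [← SimpleGraph.card_neighborSet_eq_degree]
  have e : (hammingGraph f d).neighborSet v ≃ Σ i : Fin d, {b : Fin f // b ≠ v i} := by
    refine Equiv.symm (Equiv.ofBijective
      (fun p => ⟨Function.update v p.1 p.2.1, ?_⟩) ⟨?_, ?_⟩)
    · refine ⟨p.1, ?_, ?_⟩
      · simp only [Function.update_self]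
        exact fun h => p.2.2 h.symm
      · intro j hj
        by_contra hne
        exact hj (by rw [Function.update_of_ne (fun h => hne h)])
    · rintro ⟨i, b, hb⟩ ⟨j, c, hc⟩ hpq
      have h1 : Function.update v i b = Function.update v j c :=
        congrArg Subtype.val hpq
      have hij : i = j := by
        by_contra hij
        have := congrFun h1 i
        rw [Function.update_self, Function.update_of_ne hij] at this
        exact hb this
      subst hij
      have := congrFun h1 i
      rw [Function.update_self, Function.update_self] at this
      subst this
      rfl
    · rintro ⟨y, hy⟩
      obtain ⟨i, hi, hiu⟩ := hy
      refine ⟨⟨i, y i, fun h => hi h.symm⟩, ?_⟩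
      have : y = Function.update v i (y i) := hamming_adj_update ⟨i, hi, hiu⟩ hi
      exact Subtype.ext this.symm
  rw [Fintype.card_congr e, Fintype.card_sigma]
  have hc : ∀ i : Fin d, Fintype.card {b : Fin f // b ≠ v i} = f - 1 := by
    intro i
    have := Fintype.card_subtype_compl (fun b : Fin f => b = v i)
    simpa [Fintype.card_subtype_eq] using this
  simp [hc, Finset.sum_const, Fintype.card_fin]

/-- For `f ≥ 2`, `d ≥ 1`, the only `f`-FD connectivity certificate of the
Hamming graph is the graph itself; in particular every such certificate has exactly
`n·(f−1)·d/2` edges, where `n = f^d`. -/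
theorem hamming_fd_certificate_lower_bound (f d : ℕ) (hf : 2 ≤ f) (hd : 1 ≤ d)
    (H : SimpleGraph (Fin d → Fin f)) (hcert : IsFDCertificate (hammingGraph f d) H f) :
    H = hammingGraph f d ∧ H.edgeSet.ncard = f ^ d * (f - 1) * d / 2 := by
  classical
  -- Step 1: H = hammingGraph f d
  have hHG : H = hammingGraph f d := by
    refine le_antisymm hcert.1 ?_
    intro x y hxy
    by_contra hne
    obtain ⟨i, hi, hiu⟩ := hxy
    -- the fault set: all edges crossing the cut {z | z i = x i}, except s(x,y)
    set F : Set (Sym2 (Fin d → Fin f)) :=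
      {e | e ∈ (hammingGraph f d).edgeSet ∧
        ∃ u w : Fin d → Fin f, e = s(u, w) ∧ u i = x i ∧ w i ≠ x i} \ {s(x, y)} with hF
    have hFsub : F ⊆ (hammingGraph f d).edgeSet := fun e he => he.1.1
    -- degree bound
    have hdegF : DegLE F f := by
      intro v
      have hsub : {e ∈ F | v ∈ e} ⊆
          (fun b : Fin f => s(v, Function.update v i b)) '' Set.univ := by
        rintro e ⟨⟨⟨hGe, u, w, rfl, hu, hw⟩, -⟩, hv⟩
        have hadj : (hammingGraph f d).Adj u w := hGe
        have huw : u i ≠ w i := fun h => hw (h ▸ hu)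
        rcases Sym2.mem_iff.mp hv with rfl | rfl
        · refine ⟨w i, trivial, ?_⟩
          have h1 : w = Function.update v i (w i) := hamming_adj_update hadj huw
          show s(v, Function.update v i (w i)) = s(v, w)
          rw [← h1]
        · refine ⟨u i, trivial, ?_⟩
          have h1 : u = Function.update v i (u i) :=
            hamming_adj_update hadj.symm (Ne.symm huw)
          show s(v, Function.update v i (u i)) = s(u, v)
          rw [← h1, Sym2.eq_swap]
      calc {e ∈ F | v ∈ e}.ncard
          ≤ ((fun b : Fin f => s(v, Function.update v i b)) '' Set.univ).ncard :=
            Set.ncard_le_ncard hsub (Set.finite_univ.image _)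
        _ ≤ (Set.univ : Set (Fin f)).ncard := Set.ncard_image_le Set.finite_univ
        _ = f := by rw [Set.ncard_univ]; simp
    -- x and y are reachable in G \ F via the surviving edge
    have hGadj : ((hammingGraph f d).deleteEdges F).Adj x y := by
      rw [SimpleGraph.deleteEdges_adj]
      exact ⟨⟨i, hi, hiu⟩, fun hmem => hmem.2 rfl⟩
    have hreach : (H.deleteEdges F).Reachable x y :=
      (hcert.2 F hFsub hdegF x y).mpr hGadj.reachable
    -- but in H \ F the value of coordinate i relative to x i is invariant
    have hinv : ∀ u w : Fin d → Fin f,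
        (H.deleteEdges F).Adj u w → (u i = x i ↔ w i = x i) := by
      intro u w huw
      rw [SimpleGraph.deleteEdges_adj] at huw
      obtain ⟨hH, hnF⟩ := huw
      have hne' : s(u, w) ∉ ({s(x, y)} : Set (Sym2 (Fin d → Fin f))) := by
        intro h
        rcases Sym2.eq_iff.mp h with ⟨rfl, rfl⟩ | ⟨rfl, rfl⟩
        · exact hne hH
        · exact hne hH.symm
      constructor
      · intro hui
        by_contra hwi
        exact hnF ⟨⟨hcert.1 hH, u, w, rfl, hui, hwi⟩, hne'⟩
      · intro hwi
        by_contra hui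
        refine hnF ⟨⟨hcert.1 hH, w, u, ?_, hwi, hui⟩, hne'⟩
        rw [Sym2.eq_swap]
    have hyx : y i = x i := by
      obtain ⟨p⟩ := hreach
      have hwalk : ∀ {a b : Fin d → Fin f} (_ : (H.deleteEdges F).Walk a b),
          a i = x i → b i = x i := by
        intro a b q
        induction q with
        | nil => exact id
        | cons h q ih => intro ha; exact ih ((hinv _ _ h).mp ha)
      exact hwalk p rfl
    exact hi hyx.symm
  -- Step 2: count edges
  refine ⟨hHG, ?_⟩
  rw [hHG]
  letI : DecidableRel (hammingGraph f d).Adj := Classical.decRel _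
  have hsum := SimpleGraph.sum_degrees_eq_twice_card_edges (hammingGraph f d)
  have hdeg : ∀ v : Fin d → Fin f, (hammingGraph f d).degree v = d * (f - 1) :=
    hamming_degree f d
  rw [Finset.sum_congr rfl (fun v _ => hdeg v), Finset.sum_const, Finset.card_univ] at hsum
  have hcardV : Fintype.card (Fin d → Fin f) = f ^ d := by
    simp [Fintype.card_fun]
  rw [hcardV, smul_eq_mul] at hsum
  have hedge : (hammingGraph f d).edgeSet.ncard = (hammingGraph f d).edgeFinset.card := by
    rw [← SimpleGraph.coe_edgeFinset, Set.ncard_coe_finset]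
  rw [hedge]
  have key : f ^ d * (d * (f - 1)) = f ^ d * (f - 1) * d := by ring
  omega
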